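/- Let n ≥ 1 and let c : ℤ × ℤ → ℂ be a tame frieze pattern of height n over ℂ. Set m = n + 3 and c_k := c(k, k+2) for k ∈ ℤ. Then: (a) c is periodic with period m, i.e. c(i, j) = c(i+m, j+m) for all i, j ∈ ℤ with i ≤ j ≤ i+m; (b) for every i ∈ ℤ, the product η(c_i)·η(c_{i+1})⋯η(c_{i+m−1}) equals −I₂; and (c) for all i, j ∈ ℤ with i−1 ≤ j ≤ i+n, the entry c(i, j+2) equals the (1,1)-entry of the product η(c_i)·η(c_{i+1})⋯η(c_j) (the empty product for j = i−1 being the identity matrix). -/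
import Mathlib

/-- The matrix `η(c) = !![c, -1; 1, 0]` over `ℂ`. -/
def eta (c : ℂ) : Matrix (Fin 2) (Fin 2) ℂ := !![c, -1; 1, 0]

/-- A frieze pattern of height `n` over a subset `S ⊆ ℂ`. -/
def IsFrieze (n : ℕ) (S : Set ℂ) (c : ℤ × ℤ → ℂ) : Prop :=
  (∀ i : ℤ, c (i, i) = 0) ∧
  (∀ i : ℤ, c (i, i + 1) = 1) ∧
  (∀ i : ℤ, c (i, i + n + 2) = 1) ∧
  (∀ i : ℤ, c (i, i + n + 3) = 0) ∧
  (∀ i j : ℤ, i + 2 ≤ j → j ≤ i + n + 1 → c (i, j) ∈ S) ∧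
  (∀ i j : ℤ, i + 1 ≤ j → j ≤ i + n + 2 →
    c (i, j) * c (i + 1, j + 1) - c (i, j + 1) * c (i + 1, j) = 1)

/-- A tame frieze pattern: all adjacent complete `3 × 3` submatrices have determinant `0`. -/
def IsTameFrieze (n : ℕ) (S : Set ℂ) (c : ℤ × ℤ → ℂ) : Prop :=
  IsFrieze n S c ∧
  ∀ i j : ℤ, i + 2 ≤ j → j ≤ i + n + 1 →
    Matrix.det (Matrix.of fun r s : Fin 3 => c (i + (r : ℕ), j + (s : ℕ))) = 0

lemma det3 (c : ℤ × ℤ → ℂ) (i j : ℤ) :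
    Matrix.det (Matrix.of fun r s : Fin 3 => c (i + (r : ℕ), j + (s : ℕ))) =
      c (i, j) * (c (i + 1, j + 1) * c (i + 2, j + 2) - c (i + 1, j + 2) * c (i + 2, j + 1))
      - c (i, j + 1) * (c (i + 1, j) * c (i + 2, j + 2) - c (i + 1, j + 2) * c (i + 2, j))
      + c (i, j + 2) * (c (i + 1, j) * c (i + 2, j + 1) - c (i + 1, j + 1) * c (i + 2, j)) := by
  simp [Matrix.det_fin_three]
  ring

lemma recur (n : ℕ) (c : ℤ × ℤ → ℂ) (hf : IsTameFrieze n Set.univ c) :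
    ∀ d : ℕ, ∀ i j : ℤ, j = i + d → j ≤ i + n + 1 →
      c (i, j + 2) = c (j, j + 2) * c (i, j + 1) - c (i, j) := by
  obtain ⟨⟨h0, h1, h2, h3, _, hu⟩, ht⟩ := hf
  intro d
  induction d using Nat.strong_induction_on with
  | _ d ih =>
    match d with
    | 0 =>
      intro i j hij _
      obtain rfl : j = i := by push_cast at hij; omega
      rw [h0, h1]; ring
    | 1 =>
      intro i j hij _
      obtain rfl : j = i + 1 := by push_cast at hij; omega
      have hu1 := hu i (i + 2) (by omega) (by omega)
      have e1 := h1 (i + 1)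
      have e2 := h1 i
      linear_combination (norm := ring_nf) (-1 : ℂ) * hu1 - c (i, i + 3) * e1 + e2
    | (e + 2) =>
      intro i j hij hle
      have hij' : j = i + e + 2 := by push_cast at hij; omega
      have hA := ih (e+1) (by omega) (i+1) j (by push_cast; omega) (by omega)
      have hB := ih e (by omega) (i+2) j (by push_cast; omega) (by omega)
      have hdet := ht i j (by omega) (by omega)
      rw [det3] at hdet
      have hu3 := hu (i+1) j (by omega) (by omega)
      linear_combination (norm := ring_nf) hdet +
        (c (i,j) * c (i+2,j+1) - c (i,j+1) * c (i+2,j)) * hA +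
        (c (i,j+1) * c (i+1,j) - c (i,j) * c (i+1,j+1)) * hB +
        (c (j,j+2) * c (i,j+1) - c (i,j) - c (i,j+2)) * hu3

lemma prodM (n : ℕ) (c : ℤ × ℤ → ℂ) (hf : IsTameFrieze n Set.univ c) (i : ℤ) :
    ∀ l : ℕ, (l : ℤ) ≤ n + 1 →
      ((List.range (l + 1)).map (fun k : ℕ => eta (c (i + k, i + k + 2)))).prod =
        !![c (i, i + l + 2), -c (i, i + l + 1); c (i + 1, i + l + 2), -c (i + 1, i + l + 1)] := by
  obtain ⟨⟨h0, h1, h2, h3, _, hu⟩, ht⟩ := id hf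
  intro l
  induction l with
  | zero =>
    intro _
    have e2 : c (i + 1, i + 2) = 1 := by
      have := h1 (i + 1); rwa [show (i:ℤ)+1+1 = i+2 by ring] at this
    have e0 : c (i + 1, i + 1) = 0 := h0 (i + 1)
    have e1 : c (i, i + 1) = 1 := h1 i
    simp [eta, List.range_succ, e0, e1, e2]
  | succ l IH =>
    intro hl
    have hl' : (l : ℤ) ≤ n + 1 := by push_cast at hl ⊢; omega
    rw [List.range_succ, List.map_append, List.prod_append, List.map_cons, List.map_nil,
      List.prod_cons, List.prod_nil, IH hl']
    have hA := recur n c hf (l+1) i (i + l + 1) (by push_cast; ring) (by push_cast at hl ⊢; omega)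
    have hB := recur n c hf l (i+1) (i + l + 1) (by push_cast; ring) (by push_cast at hl ⊢; omega)
    simp only [eta]
    rw [mul_one, Matrix.mul_fin_two]
    push_cast
    ext r s
    fin_cases r <;> fin_cases s <;> simp
    · linear_combination (norm := ring_nf) -hA
    · linear_combination (norm := ring_nf) (0 : ℂ)
    · linear_combination (norm := ring_nf) -hB
    · linear_combination (norm := ring_nf) (0 : ℂ)

lemma split_right (c : ℤ × ℤ → ℂ) (i : ℤ) (m : ℕ) :
    ((List.range (m + 1)).map (fun k : ℕ => eta (c (i + k, i + k + 2)))).prod =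
      ((List.range m).map (fun k : ℕ => eta (c (i + k, i + k + 2)))).prod *
        eta (c (i + m, i + m + 2)) := by
  rw [List.range_succ, List.map_append, List.prod_append, List.map_cons, List.map_nil,
    List.prod_cons, List.prod_nil, mul_one]

lemma split_left (c : ℤ × ℤ → ℂ) (i : ℤ) (m : ℕ) :
    ((List.range (m + 1)).map (fun k : ℕ => eta (c (i + k, i + k + 2)))).prod =
      eta (c (i, i + 2)) *
        ((List.range m).map (fun k : ℕ => eta (c (i + 1 + k, i + 1 + k + 2)))).prod := by
  rw [List.range_succ_eq_map, List.map_cons, List.prod_cons, List.map_map]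
  congr 1
  · norm_num
  · congr 1
    apply List.map_congr_left
    intro k _
    simp only [Function.comp_apply]
    have : i + ((k + 1 : ℕ) : ℤ) = i + 1 + (k : ℕ) := by push_cast; ring
    rw [show Nat.succ k = k + 1 from rfl, this]

lemma neg_one_mat : (-1 : Matrix (Fin 2) (Fin 2) ℂ) = !![-1, 0; 0, -1] := by
  ext r s
  fin_cases r <;> fin_cases s <;> simp [Matrix.one_apply]

lemma prodNeg (n : ℕ) (c : ℤ × ℤ → ℂ) (hn : 1 ≤ n) (hf : IsTameFrieze n Set.univ c) (i : ℤ) :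
    ((List.range (n + 3)).map (fun k : ℕ => eta (c (i + k, i + k + 2)))).prod = -1 := by
  obtain ⟨⟨h0, h1, h2, h3, _, hu⟩, ht⟩ := id hf
  -- the partial products of length n+2
  have key : ∀ j : ℤ,
      ((List.range (n + 2)).map (fun k : ℕ => eta (c (j + k, j + k + 2)))).prod =
      !![0, -1; 1, -c (j + 1, j + (n : ℤ) + 2)] := by
    intro j
    have hM := prodM n c hf j (n + 1) (by push_cast; omega)
    rw [show n + 1 + 1 = n + 2 from rfl] at hM
    rw [hM]
    have e3 : c (j, j + ((n : ℕ) + 1 : ℕ) + 2) = 0 := by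
      have := h3 j
      rw [show j + (((n : ℕ) + 1 : ℕ) : ℤ) + 2 = j + n + 3 by push_cast; ring]
      exact this
    have e2 : c (j, j + ((n : ℕ) + 1 : ℕ) + 1) = 1 := by
      have := h2 j
      rw [show j + (((n : ℕ) + 1 : ℕ) : ℤ) + 1 = j + n + 2 by push_cast; ring]
      exact this
    have e3' : c (j + 1, j + ((n : ℕ) + 1 : ℕ) + 2) = 1 := by
      have := h2 (j + 1)
      rw [show j + (((n : ℕ) + 1 : ℕ) : ℤ) + 2 = j + 1 + n + 2 by push_cast; ring]
      exact this
    have e2' : c (j + 1, j + ((n : ℕ) + 1 : ℕ) + 1) = c (j + 1, j + (n : ℤ) + 2) := by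
      rw [show j + (((n : ℕ) + 1 : ℕ) : ℤ) + 1 = j + (n : ℤ) + 2 by push_cast; ring]
    rw [e3, e2, e3', e2']
  have hsr := split_right c i (n + 2)
  have hsl := split_left c i (n + 2)
  rw [show n + 2 + 1 = n + 3 from rfl] at hsr hsl
  rw [key i] at hsr
  have hsl2 : ((List.range (n + 3)).map (fun k : ℕ => eta (c (i + k, i + k + 2)))).prod =
      eta (c (i, i + 2)) * !![0, -1; 1, -c (i + 1 + 1, i + 1 + (n : ℤ) + 2)] := by
    rw [hsl, key (i + 1)]
  set P := ((List.range (n + 3)).map (fun k : ℕ => eta (c (i + k, i + k + 2)))).prod with hP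
  set t := c (i + ((n : ℕ) + 2 : ℕ), i + ((n : ℕ) + 2 : ℕ) + 2) with hT
  set x := c (i + 1, i + (n : ℤ) + 2) with hX
  set s := c (i, i + 2) with hS
  set x' := c (i + 1 + 1, i + 1 + (n : ℤ) + 2) with hX'
  have e1 : P = !![(-1 : ℂ), 0; t + -x, -1] := by
    rw [hsr, eta, Matrix.mul_fin_two]
    norm_num
  have e2 : P = !![(-1 : ℂ), x' - s; 0, -1] := by
    rw [hsl2, eta, Matrix.mul_fin_two]
    norm_num
    ring_nf
  have h10 : t + -x = 0 := by
    have := congrArg (fun M : Matrix (Fin 2) (Fin 2) ℂ => M 1 0) (e1.symm.trans e2)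
    simpa using this
  rw [e1, h10, neg_one_mat]

lemma diagPeriod (n : ℕ) (c : ℤ × ℤ → ℂ) (hn : 1 ≤ n) (hf : IsTameFrieze n Set.univ c) (i : ℤ) :
    c (i, i + 2) = c (i + ((n : ℤ) + 3), i + ((n : ℤ) + 3) + 2) := by
  have hP := prodNeg n c hn hf i
  have hP' := prodNeg n c hn hf (i + 1)
  have hsl := split_left c i (n + 2)
  have hsr := split_right c (i + 1) (n + 2)
  rw [show n + 2 + 1 = n + 3 from rfl] at hsl hsr
  set Q := ((List.range (n + 2)).map (fun k : ℕ => eta (c (i + 1 + k, i + 1 + k + 2)))).prod with hQ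
  rw [hsl] at hP
  rw [hsr] at hP'
  -- eta s * Q = -1 and Q * eta u = -1
  have assoc : eta (c (i, i + 2)) * (Q * eta (c (i + 1 + ((n : ℕ) + 2 : ℕ), i + 1 + ((n : ℕ) + 2 : ℕ) + 2))) =
      (eta (c (i, i + 2)) * Q) * eta (c (i + 1 + ((n : ℕ) + 2 : ℕ), i + 1 + ((n : ℕ) + 2 : ℕ) + 2)) :=
    (mul_assoc _ _ _).symm
  rw [hP', hP] at assoc
  have heta : eta (c (i, i + 2)) = eta (c (i + 1 + ((n : ℕ) + 2 : ℕ), i + 1 + ((n : ℕ) + 2 : ℕ) + 2)) := by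
    have h1 : eta (c (i, i + 2)) * (-1 : Matrix (Fin 2) (Fin 2) ℂ) = -eta (c (i, i + 2)) := by
      simp
    have h2 : (-1 : Matrix (Fin 2) (Fin 2) ℂ) * eta (c (i + 1 + ((n : ℕ) + 2 : ℕ), i + 1 + ((n : ℕ) + 2 : ℕ) + 2)) =
        -eta (c (i + 1 + ((n : ℕ) + 2 : ℕ), i + 1 + ((n : ℕ) + 2 : ℕ) + 2)) := by simp
    have := assoc
    rw [h1, h2] at this
    exact neg_injective this
  have := congrArg (fun M : Matrix (Fin 2) (Fin 2) ℂ => M 0 0) heta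
  simp only [eta] at this
  norm_num at this
  rw [show (i + 1 + ((n:ℤ) + 2)) = i + ((n:ℤ) + 3) by ring] at this
  exact this

theorem stmt0 (n : ℕ) (hn : 1 ≤ n) (c : ℤ × ℤ → ℂ)
    (hf : IsTameFrieze n Set.univ c) :
    (∀ i j : ℤ, i ≤ j → j ≤ i + (n + 3) →
      c (i, j) = c (i + (n + 3), j + (n + 3))) ∧
    (∀ i : ℤ,
      ((List.range (n + 3)).map (fun k => eta (c (i + k, i + k + 2)))).prod = -1) ∧
    (∀ i j : ℤ, i - 1 ≤ j → j ≤ i + n →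
      c (i, j + 2) =
        (((List.range (j - i + 1).toNat).map
          (fun k => eta (c (i + k, i + k + 2)))).prod) 0 0) := by
  obtain ⟨⟨h0, h1, h2, h3, _, hu⟩, ht⟩ := id hf
  refine ⟨?_, fun i => ?_, ?_⟩
  case refine_2 =>
    have hp := prodNeg n c hn hf i
    simp only [bind_pure_comp, List.map_eq_map, List.map_map, Function.comp_def]
    exact hp
  · intro i j hij hji
    rcases eq_or_lt_of_le hij with rfl | hij1
    · rw [h0, h0]
    · rcases eq_or_lt_of_le (by omega : i + 1 ≤ j) with hj1 | hij2
      · rw [← hj1, h1 i, show (i + 1) + ((n:ℤ)+3) = (i + ((n:ℤ)+3)) + 1 by ring, h1]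
      · set l := (j - i - 2).toNat with hldef
        have hl : (l : ℤ) = j - i - 2 := Int.toNat_of_nonneg (by omega)
        have hl1 : (l : ℤ) ≤ n + 1 := by omega
        have hM1 := prodM n c hf i l hl1
        have hM2 := prodM n c hf (i + ((n:ℤ)+3)) l hl1
        have hlist : (List.range (l+1)).map (fun k : ℕ => eta (c (i + k, i + k + 2))) =
            (List.range (l+1)).map
              (fun k : ℕ => eta (c (i + ((n:ℤ)+3) + k, i + ((n:ℤ)+3) + k + 2))) := by
          apply List.map_congr_left
          intro k _
          have hper := diagPeriod n c hn hf (i + (k:ℤ))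
          rw [show i + (k:ℤ) + ((n:ℤ)+3) = i + ((n:ℤ)+3) + (k:ℤ) by ring] at hper
          rw [hper]
        rw [hlist, hM2] at hM1
        have hent := congrArg (fun M : Matrix (Fin 2) (Fin 2) ℂ => M 0 0) hM1
        simp only [Matrix.cons_val', Matrix.cons_val_zero, Matrix.empty_val',
          Matrix.cons_val_fin_one, Matrix.of_apply] at hent
        rw [show j = i + (l:ℤ) + 2 by omega]
        rw [show i + (l:ℤ) + 2 + ((n:ℤ)+3) = i + ((n:ℤ)+3) + (l:ℤ) + 2 by ring]
        exact hent.symm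
  · intro i j h1' h2'
    rcases eq_or_lt_of_le h1' with heq | hlt
    · rw [show (j - i + 1).toNat = 0 by omega]
      simp only [List.range_zero, List.map_nil, List.prod_nil, Matrix.one_apply_eq]
      rw [show j + (2:ℤ) = i + 1 by omega]
      exact h1 i
    · simp only [bind_pure_comp, List.map_eq_map, List.map_map, Function.comp_def]
      rw [show (j - i + 1).toNat = (j - i).toNat + 1 by omega,
        prodM n c hf i (j - i).toNat (by omega)]
      simp only [Matrix.cons_val', Matrix.cons_val_zero, Matrix.empty_val',
        Matrix.cons_val_fin_one, Matrix.of_apply]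
      rw [show j + (2:ℤ) = i + ((j - i).toNat : ℤ) + 2 by omega]
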